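/- arXiv:1001.0095 — 2 statements merged into one kernel-verified Lean document; each statement's English description precedes it below -/
import Mathlib

section
/- For every nonnegative integer n, (-1)^n = e^{-2n} ∑_{j≥0} (-2)^j τ_j(n)/j!, where τ_j(n) := n![z^n](z-n)^j e^z. -/
/-- The Poisson–Charlier coefficient τ_j(n) = ∑_{0≤ℓ≤j} C(j,ℓ)(-1)^{j-ℓ} n!/(n-ℓ)! · n^{j-ℓ}. -/
noncomputable def tau (j n : ℕ) : ℝ :=
  ∑ ℓ ∈ Finset.range (j + 1),
    (j.choose ℓ : ℝ) * (-1) ^ (j - ℓ) * (n.descFactorial ℓ : ℝ) * (n : ℝ) ^ (j - ℓ)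

lemma hb_exp_series (x : ℝ) : HasSum (fun m : ℕ => x ^ m / m.factorial) (Real.exp x) := by
  have := NormedSpace.exp_series_hasSum_exp' (𝕂 := ℝ) x
  rw [← Real.exp_eq_exp_ℝ] at this
  simpa [smul_eq_mul, div_eq_inv_mul] using this

lemma ha_binom (n : ℕ) :
    HasSum (fun ℓ : ℕ => ((n.choose ℓ : ℝ)) * (-2 : ℝ) ^ ℓ) ((-1 : ℝ) ^ n) := by
  have h0 : ∀ ℓ ∉ Finset.range (n + 1), ((n.choose ℓ : ℝ)) * (-2 : ℝ) ^ ℓ = 0 := by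
    intro ℓ hℓ
    simp [Nat.choose_eq_zero_of_lt (by simpa using Finset.mem_range.not.mp hℓ)]
  have : HasSum _ _ := hasSum_sum_of_ne_finset_zero (s := Finset.range (n + 1)) h0
  convert this using 1
  have := add_pow (-2 : ℝ) 1 n
  simp only [one_pow, mul_one] at this
  rw [show ((-2 : ℝ) + 1) = -1 by norm_num] at this
  rw [this]
  exact Finset.sum_congr rfl fun k _ => by ring

lemma key_cauchy (n j : ℕ) :
    ∑ k ∈ Finset.range (j + 1),
      ((n.choose k : ℝ) * (-2 : ℝ) ^ k) * ((2 * n : ℝ) ^ (j - k) / (j - k).factorial)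
      = (-2 : ℝ) ^ j * tau j n / (j.factorial : ℝ) := by
  rw [tau, Finset.mul_sum, Finset.sum_div]
  refine Finset.sum_congr rfl fun k hk => ?_
  have hk' : k ≤ j := Nat.lt_succ_iff.mp (Finset.mem_range.mp hk)
  have h1 : (j.factorial : ℝ) = (j.choose k : ℝ) * k.factorial * (j - k).factorial := by
    exact_mod_cast (Nat.choose_mul_factorial_mul_factorial hk').symm
  have h2 : (n.descFactorial k : ℝ) = (k.factorial : ℝ) * n.choose k := by
    exact_mod_cast Nat.descFactorial_eq_factorial_mul_choose n k
  have h3 : ((-2 : ℝ)) ^ j = (-2) ^ k * (-2) ^ (j - k) := by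
    rw [← pow_add, Nat.add_sub_cancel' hk']
  have h4 : ((-2 : ℝ)) ^ (j - k) * (-1) ^ (j - k) = 2 ^ (j - k) := by
    rw [← mul_pow]; norm_num
  have h5 : ((2 : ℝ) * n) ^ (j - k) = 2 ^ (j - k) * (n : ℝ) ^ (j - k) := mul_pow _ _ _
  have hkf : (k.factorial : ℝ) ≠ 0 := by positivity
  have hjkf : ((j - k).factorial : ℝ) ≠ 0 := by positivity
  have hc : (j.choose k : ℝ) ≠ 0 := by
    exact_mod_cast (Nat.choose_pos hk').ne'
  rw [h1, h2, h3, h5]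
  field_simp
  rw [mul_assoc _ ((-2 : ℝ) ^ (j - k)), h4]
  ring

/-- For every n, (-1)^n = e^{-2n} ∑_{j≥0} (-2)^j τ_j(n)/j!. -/
theorem neg_one_pow_eq_poisson_charlier (n : ℕ) :
    HasSum (fun j : ℕ => Real.exp (-(2 * n)) * ((-2 : ℝ) ^ j * tau j n / (j.factorial : ℝ)))
      ((-1 : ℝ) ^ n) := by
  have hgsum := hb_exp_series (2 * n : ℝ)
  have hfnorm : Summable fun ℓ : ℕ => ‖(n.choose ℓ : ℝ) * (-2 : ℝ) ^ ℓ‖ := by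
    apply summable_of_ne_finset_zero (s := Finset.range (n + 1))
    intro ℓ hℓ
    simp [Nat.choose_eq_zero_of_lt (by simpa using Finset.mem_range.not.mp hℓ)]
  have hgnorm : Summable fun m : ℕ => ‖(2 * n : ℝ) ^ m / m.factorial‖ := by
    have : ∀ m : ℕ, ‖(2 * n : ℝ) ^ m / m.factorial‖ = (2 * n : ℝ) ^ m / m.factorial := by
      intro m; rw [Real.norm_eq_abs, abs_of_nonneg (by positivity)]
    simpa [this] using hgsum.summable
  have hc := hasSum_sum_range_mul_of_summable_norm hfnorm hgnorm
  rw [(ha_binom n).tsum_eq, hgsum.tsum_eq] at hc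
  have hc2 : HasSum (fun j : ℕ => (-2 : ℝ) ^ j * tau j n / (j.factorial : ℝ))
      ((-1 : ℝ) ^ n * Real.exp (2 * n)) := by
    have e : (fun j : ℕ => (-2 : ℝ) ^ j * tau j n / (j.factorial : ℝ)) = fun j : ℕ =>
        ∑ k ∈ Finset.range (j + 1), ((n.choose k : ℝ) * (-2 : ℝ) ^ k) *
          ((2 * n : ℝ) ^ (j - k) / (j - k).factorial) := funext fun j => (key_cauchy n j).symm
    rw [e]
    exact hc
  have := hc2.mul_left (Real.exp (-(2 * n)))
  convert this using 1
  · rfl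
  rw [mul_comm (Real.exp _) ((-1 : ℝ) ^ n * Real.exp _), mul_assoc, ← Real.exp_add]
  simp
end

section
/- For every nonnegative integer n, 2^n = e^n ∑_{j≥0} τ_j(n)/j!, where τ_j(n) := n![z^n](z-n)^j e^z. -/
open Finset in
lemma tau_term_rewrite (n j : ℕ) :
    Real.exp n * (tau j n / (j.factorial : ℝ)) =
      ∑ ℓ ∈ range (n + 1),
        (if ℓ ≤ j then
          (n.choose ℓ : ℝ) * (Real.exp n * (-(n : ℝ)) ^ (j - ℓ) / ((j - ℓ).factorial : ℝ))
        else 0) := by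
  have key : ∀ ℓ ∈ range (max j n + 1),
      Real.exp n * ((j.choose ℓ : ℝ) * (-1) ^ (j - ℓ) * (n.descFactorial ℓ : ℝ) *
        (n : ℝ) ^ (j - ℓ) / (j.factorial : ℝ)) =
      (if ℓ ≤ j then
        (n.choose ℓ : ℝ) * (Real.exp n * (-(n : ℝ)) ^ (j - ℓ) / ((j - ℓ).factorial : ℝ))
      else 0) := by
    intro ℓ _
    by_cases h : ℓ ≤ j
    · rw [if_pos h]
      have hfact : (j.choose ℓ : ℝ) * (n.descFactorial ℓ : ℝ) * ((j - ℓ).factorial : ℝ)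
          = (j.factorial : ℝ) * (n.choose ℓ : ℝ) := by
        have h1 : j.choose ℓ * ℓ.factorial * (j - ℓ).factorial = j.factorial :=
          Nat.choose_mul_factorial_mul_factorial h
        have h2 : n.descFactorial ℓ = ℓ.factorial * n.choose ℓ :=
          Nat.descFactorial_eq_factorial_mul_choose n ℓ
        push_cast [h2, ← h1]
        ring
      have hj : (j.factorial : ℝ) ≠ 0 := Nat.cast_ne_zero.2 j.factorial_ne_zero
      have hjl : ((j - ℓ).factorial : ℝ) ≠ 0 := Nat.cast_ne_zero.2 (j - ℓ).factorial_ne_zero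
      have hneg : (-(n : ℝ)) ^ (j - ℓ) = (-1) ^ (j - ℓ) * (n : ℝ) ^ (j - ℓ) := by
        rw [neg_pow]
      field_simp [hneg]
      linear_combination ((-1 : ℝ) ^ (j - ℓ) * (n : ℝ) ^ (j - ℓ)) * hfact
    · rw [if_neg h]
      have : j.choose ℓ = 0 := Nat.choose_eq_zero_of_lt (lt_of_not_ge h)
      simp [this]
  -- extend tau's sum to range (max j n + 1)
  have hsub1 : range (j + 1) ⊆ range (max j n + 1) := by
    apply range_subset_range.2; omega
  have hsub2 : range (n + 1) ⊆ range (max j n + 1) := by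
    apply range_subset_range.2; omega
  have e1 : tau j n = ∑ ℓ ∈ range (max j n + 1),
      (j.choose ℓ : ℝ) * (-1) ^ (j - ℓ) * (n.descFactorial ℓ : ℝ) * (n : ℝ) ^ (j - ℓ) := by
    rw [tau]
    refine Finset.sum_subset hsub1 ?_
    intro ℓ _ hℓ
    have : j < ℓ := by simp only [mem_range] at hℓ; omega
    simp [Nat.choose_eq_zero_of_lt this]
  have e2 : ∑ ℓ ∈ range (n + 1),
      (if ℓ ≤ j then
        (n.choose ℓ : ℝ) * (Real.exp n * (-(n : ℝ)) ^ (j - ℓ) / ((j - ℓ).factorial : ℝ))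
      else 0) = ∑ ℓ ∈ range (max j n + 1),
      (if ℓ ≤ j then
        (n.choose ℓ : ℝ) * (Real.exp n * (-(n : ℝ)) ^ (j - ℓ) / ((j - ℓ).factorial : ℝ))
      else 0) := by
    refine Finset.sum_subset hsub2 ?_
    intro ℓ _ hℓ
    have : n < ℓ := by simp only [mem_range] at hℓ; omega
    simp [Nat.choose_eq_zero_of_lt this]
  rw [e1, e2, Finset.sum_div, Finset.mul_sum]
  exact Finset.sum_congr rfl key

/-- For every n, 2^n = e^n ∑_{j≥0} τ_j(n)/j!. -/
theorem two_pow_eq_poisson_charlier (n : ℕ) :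
    HasSum (fun j : ℕ => Real.exp n * (tau j n / (j.factorial : ℝ))) ((2 : ℝ) ^ n) := by
  have hexp : HasSum (fun i : ℕ => (-(n : ℝ)) ^ i / (i.factorial : ℝ)) (Real.exp (-(n : ℝ))) := by
    rw [Real.exp_eq_exp_ℝ]
    exact NormedSpace.expSeries_div_hasSum_exp (-(n : ℝ))
  -- each ℓ-row sums to n.choose ℓ
  have hrow : ∀ ℓ : ℕ, HasSum (fun j : ℕ =>
      (if ℓ ≤ j then
        (n.choose ℓ : ℝ) * (Real.exp n * (-(n : ℝ)) ^ (j - ℓ) / ((j - ℓ).factorial : ℝ))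
      else 0)) ((n.choose ℓ : ℝ)) := by
    intro ℓ
    have h1 : HasSum (fun i : ℕ =>
        (n.choose ℓ : ℝ) * (Real.exp n * (-(n : ℝ)) ^ i / (i.factorial : ℝ)))
        ((n.choose ℓ : ℝ)) := by
      have := (hexp.mul_left (Real.exp n)).mul_left ((n.choose ℓ : ℝ))
      simp only [← Real.exp_add, add_neg_cancel, Real.exp_zero, mul_one] at this
      simpa only [mul_div_assoc] using this
    have heq : (fun i : ℕ =>
        (if ℓ ≤ i + ℓ then
          (n.choose ℓ : ℝ) *
            (Real.exp n * (-(n : ℝ)) ^ (i + ℓ - ℓ) / ((i + ℓ - ℓ).factorial : ℝ))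
        else 0)) = fun i : ℕ =>
        (n.choose ℓ : ℝ) * (Real.exp n * (-(n : ℝ)) ^ i / (i.factorial : ℝ)) := by
      funext i
      rw [if_pos (Nat.le_add_left ℓ i), Nat.add_sub_cancel]
    have hzero : ∑ i ∈ Finset.range ℓ,
        (if ℓ ≤ i then
          (n.choose ℓ : ℝ) * (Real.exp n * (-(n : ℝ)) ^ (i - ℓ) / ((i - ℓ).factorial : ℝ))
        else 0) = 0 := by
      apply Finset.sum_eq_zero
      intro i hi
      rw [if_neg (by simp only [Finset.mem_range] at hi; omega)]
    have h2 : HasSum (fun i : ℕ =>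
        (if ℓ ≤ i + ℓ then
          (n.choose ℓ : ℝ) *
            (Real.exp n * (-(n : ℝ)) ^ (i + ℓ - ℓ) / ((i + ℓ - ℓ).factorial : ℝ))
        else 0)) ((n.choose ℓ : ℝ) - ∑ i ∈ Finset.range ℓ,
        (if ℓ ≤ i then
          (n.choose ℓ : ℝ) * (Real.exp n * (-(n : ℝ)) ^ (i - ℓ) / ((i - ℓ).factorial : ℝ))
        else 0)) := by
      rw [heq, hzero, sub_zero]; exact h1
    exact (hasSum_nat_add_iff' ℓ).1 h2
  have hsum := hasSum_sum (s := Finset.range (n + 1))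
    (f := fun ℓ j => (if ℓ ≤ j then
      (n.choose ℓ : ℝ) * (Real.exp n * (-(n : ℝ)) ^ (j - ℓ) / ((j - ℓ).factorial : ℝ))
    else 0)) (a := fun ℓ => (n.choose ℓ : ℝ)) (fun ℓ _ => hrow ℓ)
  have htwo : ∑ ℓ ∈ Finset.range (n + 1), (n.choose ℓ : ℝ) = (2 : ℝ) ^ n := by
    rw [← Nat.cast_sum, Nat.sum_range_choose]
    push_cast
    ring
  rw [htwo] at hsum
  convert hsum using 1
  funext j
  exact tau_term_rewrite n j
end
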